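/- arXiv:math/0311490 — 2 statements merged into one kernel-verified Lean document; each statement's English description precedes it below -/
import Mathlib

section
/- Let n ≥ 3 and let α_n be the automorphism of the free metabelian group M_n defined on generators by g_i ↦ [[g_1,g_2]g_n, g_i]·g_i for i < n and g_n ↦ [g_1,g_2]·g_n. Let ᾱ_n be the ring endomorphism of R = ℤ[s_1^{±1},…,s_n^{±1}, t_1,…,t_n] fixing each s_i and defined by ᾱ_n(t_i) = s_n t_i + (1−s_i)((1−s_2)t_1 − (1−s_1)t_2 + t_n) for i < n and ᾱ_n(t_n) = (1−s_2)t_1 − (1−s_1)t_2 + t_n. Then for every g ∈ M_n, φ(α_n(g)) equals the matrix obtained by applying ᾱ_n entrywise to φ(g). -/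
open MvPolynomial
open scoped commutatorElement

abbrev LaurentRing (n : ℕ) := AddMonoidAlgebra ℤ (Fin n →₀ ℤ)

noncomputable def sVar (n : ℕ) (i : Fin n) : LaurentRing n :=
  AddMonoidAlgebra.single (Finsupp.single i 1) 1

noncomputable def sVarInv (n : ℕ) (i : Fin n) : LaurentRing n :=
  AddMonoidAlgebra.single (-Finsupp.single i 1) 1

lemma sVar_mul_sVarInv (n : ℕ) (i : Fin n) : sVar n i * sVarInv n i = 1 := by
  rw [sVar, sVarInv, AddMonoidAlgebra.single_mul_single, add_neg_cancel, one_mul,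
    AddMonoidAlgebra.one_def]

abbrev MagnusRing (n : ℕ) := MvPolynomial (Fin n) (LaurentRing n)

noncomputable def magnusUnit (n : ℕ) (i : Fin n) : (Matrix (Fin 2) (Fin 2) (MagnusRing n))ˣ where
  val := !![C (sVar n i), X i; 0, 1]
  inv := !![C (sVarInv n i), -(C (sVarInv n i) * X i); 0, 1]
  val_inv := by
    have h : (C (sVar n i) * C (sVarInv n i) : MagnusRing n) = 1 := by
      rw [← map_mul, sVar_mul_sVarInv, map_one]
    rw [Matrix.mul_fin_two, Matrix.one_fin_two]
    have e00 : (C (sVar n i) * C (sVarInv n i) + X i * 0 : MagnusRing n) = 1 := by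
      linear_combination h
    have e01 : (C (sVar n i) * -(C (sVarInv n i) * X i) + X i * 1 : MagnusRing n) = 0 := by
      linear_combination (-(X i) : MagnusRing n) * h
    rw [e00, e01]
    norm_num
  inv_val := by
    have h : (C (sVarInv n i) * C (sVar n i) : MagnusRing n) = 1 := by
      rw [← map_mul, mul_comm, sVar_mul_sVarInv, map_one]
    rw [Matrix.mul_fin_two, Matrix.one_fin_two]
    have e00 : (C (sVarInv n i) * C (sVar n i) + -(C (sVarInv n i) * X i) * 0 :
        MagnusRing n) = 1 := by
      linear_combination h
    have e01 : (C (sVarInv n i) * X i + -(C (sVarInv n i) * X i) * 1 : MagnusRing n) = 0 := by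
      ring
    rw [e00, e01]
    norm_num

section lowerTriv
variable {R : Type*} [CommRing R]

def lowerTriv (R : Type*) [CommRing R] : Subgroup (Matrix (Fin 2) (Fin 2) R)ˣ where
  carrier := {A | A.val 1 0 = 0 ∧ A.val 1 1 = 1}
  one_mem' := ⟨by simp, by simp⟩
  mul_mem' := by
    rintro A B ⟨ha0, ha1⟩ ⟨hb0, hb1⟩
    constructor <;>
      simp [Units.val_mul, Matrix.mul_apply, Fin.sum_univ_two, ha0, ha1, hb0, hb1]
  inv_mem' := by
    rintro A ⟨h0, h1⟩
    have key : ∀ j, A.inv 1 j = (1 : Matrix (Fin 2) (Fin 2) R) 1 j := by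
      intro j
      have h : (A.val * A.inv) 1 j = (1 : Matrix (Fin 2) (Fin 2) R) 1 j := by
        rw [A.val_inv]
      rwa [Matrix.mul_apply, Fin.sum_univ_two, h0, h1, zero_mul, one_mul, zero_add] at h
    exact ⟨by simpa using key 0, by simpa using key 1⟩

lemma mem_lowerTriv {A : (Matrix (Fin 2) (Fin 2) R)ˣ} :
    A ∈ lowerTriv R ↔ A.val 1 0 = 0 ∧ A.val 1 1 = 1 := Iff.rfl

lemma lowerTriv_mul_apply_zero_zero {A B : (Matrix (Fin 2) (Fin 2) R)ˣ}
    (hB : B ∈ lowerTriv R) :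
    (A * B).val 0 0 = A.val 0 0 * B.val 0 0 := by
  obtain ⟨hb0, -⟩ := mem_lowerTriv.mp hB
  simp [Units.val_mul, Matrix.mul_apply, Fin.sum_univ_two, hb0]

lemma lowerTriv_inv_zero_zero {A : (Matrix (Fin 2) (Fin 2) R)ˣ}
    (hA : A ∈ lowerTriv R) :
    A.val 0 0 * (A⁻¹).val 0 0 = 1 := by
  have h := lowerTriv_mul_apply_zero_zero (A := A) (B := A⁻¹) ((lowerTriv R).inv_mem hA)
  rw [mul_inv_cancel] at h
  simpa using h.symm

def upperUni (R : Type*) [CommRing R] : Subgroup (Matrix (Fin 2) (Fin 2) R)ˣ where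
  carrier := {A | A.val 0 0 = 1 ∧ A.val 1 0 = 0 ∧ A.val 1 1 = 1}
  one_mem' := ⟨by simp, by simp, by simp⟩
  mul_mem' := by
    rintro A B ⟨ha, ha0, ha1⟩ ⟨hb, hb0, hb1⟩
    refine ⟨?_, ?_, ?_⟩ <;>
      simp [Units.val_mul, Matrix.mul_apply, Fin.sum_univ_two, ha, ha0, ha1, hb, hb0, hb1]
  inv_mem' := by
    rintro A ⟨ha, ha0, ha1⟩
    have hmem : A ∈ lowerTriv R := ⟨ha0, ha1⟩
    obtain ⟨h0, h1⟩ := mem_lowerTriv.mp ((lowerTriv R).inv_mem hmem)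
    have h := lowerTriv_inv_zero_zero hmem
    rw [ha, one_mul] at h
    exact ⟨h, h0, h1⟩

lemma mem_upperUni {A : (Matrix (Fin 2) (Fin 2) R)ˣ} :
    A ∈ upperUni R ↔ A.val 0 0 = 1 ∧ A.val 1 0 = 0 ∧ A.val 1 1 = 1 := Iff.rfl

lemma upperUni_comm {A B : (Matrix (Fin 2) (Fin 2) R)ˣ}
    (hA : A ∈ upperUni R) (hB : B ∈ upperUni R) : A * B = B * A := by
  obtain ⟨ha, ha0, ha1⟩ := mem_upperUni.mp hA
  obtain ⟨hb, hb0, hb1⟩ := mem_upperUni.mp hB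
  ext : 1
  rw [Units.val_mul, Units.val_mul, Matrix.eta_fin_two A.val, Matrix.eta_fin_two B.val,
    ha, ha0, ha1, hb, hb0, hb1, Matrix.mul_fin_two, Matrix.mul_fin_two]
  ring_nf

lemma commutator_mem_upperUni {A B : (Matrix (Fin 2) (Fin 2) R)ˣ}
    (hA : A ∈ lowerTriv R) (hB : B ∈ lowerTriv R) : ⁅A, B⁆ ∈ upperUni R := by
  have hAi := (lowerTriv R).inv_mem hA
  have hBi := (lowerTriv R).inv_mem hB
  have hmem : ⁅A, B⁆ ∈ lowerTriv R :=
    Subgroup.mul_mem _ (Subgroup.mul_mem _ (Subgroup.mul_mem _ hA hB) hAi) hBi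
  obtain ⟨hc0, hc1⟩ := mem_lowerTriv.mp hmem
  refine mem_upperUni.mpr ⟨?_, hc0, hc1⟩
  show (A * B * A⁻¹ * B⁻¹).val 0 0 = 1
  rw [lowerTriv_mul_apply_zero_zero hBi, lowerTriv_mul_apply_zero_zero hAi,
    lowerTriv_mul_apply_zero_zero hB]
  have h1 := lowerTriv_inv_zero_zero hA
  have h2 := lowerTriv_inv_zero_zero hB
  calc A.val 0 0 * B.val 0 0 * (A⁻¹).val 0 0 * (B⁻¹).val 0 0
      = (A.val 0 0 * (A⁻¹).val 0 0) * (B.val 0 0 * (B⁻¹).val 0 0) := by ring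
    _ = 1 := by rw [h1, h2, one_mul]

lemma derivedSeries_two_map_eq_one {G : Type*} [Group G]
    (f : G →* (Matrix (Fin 2) (Fin 2) R)ˣ) (hf : ∀ g, f g ∈ lowerTriv R) :
    ∀ x ∈ derivedSeries G 2, f x = 1 := by
  have h1 : derivedSeries G 1 ≤ (upperUni R).comap f := by
    have e : derivedSeries G 1 = ⁅derivedSeries G 0, derivedSeries G 0⁆ :=
      derivedSeries_succ G 0
    rw [e, Subgroup.commutator_le]
    intro g _ h _
    simp only [Subgroup.mem_comap, map_commutatorElement]
    exact commutator_mem_upperUni (hf g) (hf h)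
  have h2 : derivedSeries G 2 ≤ f.ker := by
    have e : derivedSeries G 2 = ⁅derivedSeries G 1, derivedSeries G 1⁆ :=
      derivedSeries_succ G 1
    rw [e, Subgroup.commutator_le]
    intro g hg h hh
    rw [MonoidHom.mem_ker, map_commutatorElement, commutatorElement_eq_one_iff_mul_comm]
    exact upperUni_comm (h1 hg) (h1 hh)
  exact fun x hx => h2 hx

end lowerTriv

abbrev FreeMetabelian (n : ℕ) :=
  FreeGroup (Fin n) ⧸ derivedSeries (FreeGroup (Fin n)) 2

instance (n : ℕ) : (derivedSeries (FreeGroup (Fin n)) 2).Normal :=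
  derivedSeries_normal _ _

def gen (n : ℕ) (i : Fin n) : FreeMetabelian n :=
  QuotientGroup.mk (FreeGroup.of i)

/-- The Magnus representation on the free group. -/
noncomputable def magnusFree (n : ℕ) :
    FreeGroup (Fin n) →* (Matrix (Fin 2) (Fin 2) (MagnusRing n))ˣ :=
  FreeGroup.lift (magnusUnit n)

lemma magnusFree_mem_lowerTriv (n : ℕ) (g : FreeGroup (Fin n)) :
    magnusFree n g ∈ lowerTriv (MagnusRing n) := by
  refine FreeGroup.range_lift_le (s := lowerTriv (MagnusRing n)) ?_ ⟨g, rfl⟩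
  rintro A ⟨i, rfl⟩
  exact ⟨by simp [magnusUnit], by simp [magnusUnit]⟩

/-- The Magnus representation of the free metabelian group. -/
noncomputable def Magnus (n : ℕ) :
    FreeMetabelian n →* (Matrix (Fin 2) (Fin 2) (MagnusRing n))ˣ :=
  QuotientGroup.lift (derivedSeries (FreeGroup (Fin n)) 2) (magnusFree n)
    (derivedSeries_two_map_eq_one (magnusFree n) (magnusFree_mem_lowerTriv n))

/-- The Laurent monomial `s₁^{j₁} ⋯ sₙ^{jₙ}` with exponent vector `j`. -/
noncomputable def sMonomial (n : ℕ) (j : Fin n →₀ ℤ) : LaurentRing n :=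
  AddMonoidAlgebra.single j 1


/-- The polynomial `w = (1 - s₂) t₁ - (1 - s₁) t₂ + tₙ`. -/
noncomputable def wPoly (n : ℕ) (hn : 3 ≤ n) : MagnusRing n :=
  (1 - C (sVar n ⟨1, by omega⟩)) * X ⟨0, by omega⟩
    - (1 - C (sVar n ⟨0, by omega⟩)) * X ⟨1, by omega⟩ + X ⟨n - 1, by omega⟩

/-- The ring endomorphism `ᾱₙ` of `R = ℤ[s^{±1}, t]`: it fixes the Laurent coefficients
(hence each `sᵢ`), sends `tᵢ` to `sₙ tᵢ + (1 - sᵢ)((1 - s₂) t₁ - (1 - s₁) t₂ + tₙ)` for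
`i < n`, and sends `tₙ` to `(1 - s₂) t₁ - (1 - s₁) t₂ + tₙ`. -/
noncomputable def alphaBar (n : ℕ) (hn : 3 ≤ n) : MagnusRing n →+* MagnusRing n :=
  (MvPolynomial.aeval (R := LaurentRing n) (fun i : Fin n =>
      if (i : ℕ) < n - 1 then
        C (sVar n ⟨n - 1, by omega⟩) * X i + (1 - C (sVar n i)) * wPoly n hn
      else wPoly n hn) :
    MagnusRing n →ₐ[LaurentRing n] MagnusRing n).toRingHom

section triUnit
variable {S : Type*} [CommRing S]

/-- An upper triangular 2×2 unit `[[a, b], [0, 1]]` with explicit inverse data. -/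
noncomputable def triUnit (a b a' : S) (h : a * a' = 1) : (Matrix (Fin 2) (Fin 2) S)ˣ where
  val := !![a, b; 0, 1]
  inv := !![a', -(a' * b); 0, 1]
  val_inv := by
    rw [Matrix.mul_fin_two, Matrix.one_fin_two]
    have e00 : a * a' + b * 0 = 1 := by linear_combination h
    have e01 : a * -(a' * b) + b * 1 = 0 := by linear_combination (-b) * h
    rw [e00, e01]; norm_num
  inv_val := by
    rw [Matrix.mul_fin_two, Matrix.one_fin_two]
    have e00 : a' * a + -(a' * b) * 0 = 1 := by linear_combination h
    have e01 : a' * b + -(a' * b) * 1 = 0 := by ring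
    rw [e00, e01]; norm_num

lemma triUnit_val (a b a' : S) (h : a * a' = 1) :
    (triUnit a b a' h : Matrix (Fin 2) (Fin 2) S) = !![a, b; 0, 1] := rfl

lemma triUnit_congr {a b a' c d c' : S} (h : a * a' = 1) (h' : c * c' = 1)
    (ha : a = c) (hb : b = d) : triUnit a b a' h = triUnit c d c' h' := by
  apply Units.ext
  rw [triUnit_val, triUnit_val, ha, hb]

lemma triUnit_mul {a b a' c d c' : S} (h : a * a' = 1) (h' : c * c' = 1) :
    triUnit a b a' h * triUnit c d c' h' =
      triUnit (a * c) (a * d + b) (a' * c') (by linear_combination (c * c') * h + h') := by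
  apply Units.ext
  rw [Units.val_mul, triUnit_val, triUnit_val, triUnit_val, Matrix.mul_fin_two]
  norm_num

lemma triUnit_inv {a b a' : S} (h : a * a' = 1) :
    (triUnit a b a' h)⁻¹ = triUnit a' (-(a' * b)) a (by linear_combination h) :=
  Units.ext rfl

lemma triUnit_commutator {a b a' c d c' : S} (h : a * a' = 1) (h' : c * c' = 1) :
    ⁅triUnit a b a' h, triUnit c d c' h'⁆ =
      triUnit 1 ((1 - c) * b - (1 - a) * d) 1 (one_mul 1) := by
  rw [commutatorElement_def, triUnit_inv, triUnit_inv, triUnit_mul, triUnit_mul, triUnit_mul]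
  apply triUnit_congr
  · linear_combination (c * c') * h + h'
  · linear_combination (-(d * c * c') - c * b) * h + (-d) * h'

end triUnit

lemma alphaBar_C (n : ℕ) (hn : 3 ≤ n) (a : LaurentRing n) :
    alphaBar n hn (C a) = C a := by
  simp [alphaBar, MvPolynomial.algebraMap_eq]

lemma alphaBar_X (n : ℕ) (hn : 3 ≤ n) (i : Fin n) :
    alphaBar n hn (X i) =
      if (i : ℕ) < n - 1 then
        C (sVar n ⟨n - 1, by omega⟩) * X i + (1 - C (sVar n i)) * wPoly n hn
      else wPoly n hn := by
  simp [alphaBar]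

lemma sC_mul (n : ℕ) (i : Fin n) :
    (C (sVar n i) : MagnusRing n) * C (sVarInv n i) = 1 := by
  rw [← map_mul, sVar_mul_sVarInv, map_one]

lemma magnusUnit_eq_triUnit (n : ℕ) (i : Fin n) :
    magnusUnit n i = triUnit (C (sVar n i)) (X i) (C (sVarInv n i)) (sC_mul n i) :=
  Units.ext rfl

lemma Magnus_gen (n : ℕ) (i : Fin n) :
    Magnus n (gen n i) = magnusUnit n i := by
  show magnusFree n (FreeGroup.of i) = magnusUnit n i
  rw [magnusFree, FreeGroup.lift_apply_of]

lemma Magnus_c (n : ℕ) (hn : 3 ≤ n) :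
    Magnus n (⁅gen n ⟨0, by omega⟩, gen n ⟨1, by omega⟩⁆ * gen n ⟨n - 1, by omega⟩) =
      triUnit (C (sVar n ⟨n - 1, by omega⟩)) (wPoly n hn)
        (C (sVarInv n ⟨n - 1, by omega⟩)) (sC_mul n _) := by
  rw [map_mul, map_commutatorElement, Magnus_gen, Magnus_gen, Magnus_gen,
    magnusUnit_eq_triUnit, magnusUnit_eq_triUnit, magnusUnit_eq_triUnit,
    triUnit_commutator, triUnit_mul]
  apply triUnit_congr
  · ring
  · rw [wPoly]; ring

set_option maxHeartbeats 1000000 in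
/-- For the automorphism `αₙ` of the free metabelian group (defined on generators by
`gᵢ ↦ [[g₁,g₂]gₙ, gᵢ]·gᵢ` for `i < n` and `gₙ ↦ [g₁,g₂]·gₙ`), the Magnus representation
satisfies `φ(αₙ g) = ᾱₙ(φ g)` entrywise, where `ᾱₙ` is the ring endomorphism `alphaBar`. -/
theorem magnus_of_alpha (n : ℕ) (hn : 3 ≤ n) (α : FreeMetabelian n ≃* FreeMetabelian n)
    (hα₁ : ∀ i : Fin n, (i : ℕ) < n - 1 →
      α (gen n i) =
        ⁅⁅gen n ⟨0, by omega⟩, gen n ⟨1, by omega⟩⁆ * gen n ⟨n - 1, by omega⟩, gen n i⁆ *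
          gen n i)
    (hα₂ : α (gen n ⟨n - 1, by omega⟩) =
      ⁅gen n ⟨0, by omega⟩, gen n ⟨1, by omega⟩⁆ * gen n ⟨n - 1, by omega⟩) :
    ∀ g : FreeMetabelian n,
      (Magnus n (α g) : Matrix (Fin 2) (Fin 2) (MagnusRing n)) =
        (Magnus n g : Matrix (Fin 2) (Fin 2) (MagnusRing n)).map (alphaBar n hn) := by
  -- Reduce to an equality of monoid homomorphisms out of the free group.
  have key : (Magnus n).comp ((α : FreeMetabelian n →* FreeMetabelian n).comp
        (QuotientGroup.mk' (derivedSeries (FreeGroup (Fin n)) 2))) =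
      ((Units.map ((alphaBar n hn).mapMatrix.toMonoidHom)).comp (Magnus n)).comp
        (QuotientGroup.mk' (derivedSeries (FreeGroup (Fin n)) 2)) := by
    apply FreeGroup.ext_hom
    intro i
    show Magnus n (α (gen n i)) = Units.map _ (Magnus n (gen n i))
    have hval : ∀ u : (Matrix (Fin 2) (Fin 2) (MagnusRing n))ˣ,
        (Units.map ((alphaBar n hn).mapMatrix.toMonoidHom) u : Matrix (Fin 2) (Fin 2)
          (MagnusRing n)) = (u : Matrix (Fin 2) (Fin 2) (MagnusRing n)).map (alphaBar n hn) :=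
      fun u => rfl
    by_cases hi : (i : ℕ) < n - 1
    · rw [hα₁ i hi]
      have hexp : (⁅⁅gen n ⟨0, by omega⟩, gen n ⟨1, by omega⟩⁆ * gen n ⟨n - 1, by omega⟩,
            gen n i⁆ * gen n i : FreeMetabelian n) =
          (⁅gen n ⟨0, by omega⟩, gen n ⟨1, by omega⟩⁆ * gen n ⟨n - 1, by omega⟩) * gen n i *
            (⁅gen n ⟨0, by omega⟩, gen n ⟨1, by omega⟩⁆ * gen n ⟨n - 1, by omega⟩)⁻¹ := by
        group
      rw [hexp, map_mul, map_mul, map_inv, Magnus_c n hn, Magnus_gen,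
        magnusUnit_eq_triUnit, triUnit_inv, triUnit_mul, triUnit_mul]
      apply Units.ext
      rw [hval, triUnit_val, triUnit_val]
      have h1 := sC_mul n (⟨n - 1, by omega⟩ : Fin n)
      refine Matrix.ext fun a b => ?_
      fin_cases a <;> fin_cases b <;>
        simp [Matrix.map_apply, alphaBar_C, alphaBar_X, if_pos hi]
      · linear_combination C (sVar n i) * h1
      · linear_combination (-(C (sVar n i) * wPoly n hn)) * h1
    · have hi' : i = ⟨n - 1, by omega⟩ := by
        apply Fin.ext
        have := i.isLt
        simp only []
        omega
      rw [hi', hα₂, Magnus_c n hn]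
      apply Units.ext
      rw [hval, Magnus_gen, magnusUnit_eq_triUnit, triUnit_val, triUnit_val]
      have hlt : ¬ ((⟨n - 1, by omega⟩ : Fin n) : ℕ) < n - 1 := by simp
      refine Matrix.ext fun a b => ?_
      fin_cases a <;> fin_cases b <;>
        simp [Matrix.map_apply, alphaBar_C, alphaBar_X, if_neg hlt]
  -- Now apply the hom equality to an arbitrary element.
  intro g
  obtain ⟨x, rfl⟩ := QuotientGroup.mk'_surjective (derivedSeries (FreeGroup (Fin n)) 2) g
  have h := DFunLike.congr_fun key x
  simp only [MonoidHom.comp_apply] at h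
  rw [show α (QuotientGroup.mk' _ x) =
      (α : FreeMetabelian n →* FreeMetabelian n) (QuotientGroup.mk' _ x) from rfl, h]
  rfl
end

section
/- Let S = s_1^{j_1}⋯s_n^{j_n} be a Laurent monomial with integer exponents in the Laurent polynomial ring ℤ[s_1^{±1},…,s_n^{±1}] (n ≥ 1), and let A be an element of this ring. If 1 − S = (1 − s_n)^2 · A, then S = 1 and A = 0. -/
open MvPolynomial

noncomputable def epsHom (n : ℕ) : LaurentRing n →+* ℤ :=
  (AddMonoidAlgebra.lift ℤ ℤ (Fin n →₀ ℤ) 1).toRingHom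

lemma epsHom_single (n : ℕ) (f : Fin n →₀ ℤ) (c : ℤ) :
    epsHom n (AddMonoidAlgebra.single f c) = c := by
  simp [epsHom, AddMonoidAlgebra.lift_single]

noncomputable def derivHom (n : ℕ) (i : Fin n) : LaurentRing n →+ ℤ :=
  (Finsupp.liftAddHom (fun f : Fin n →₀ ℤ => AddMonoidHom.mulLeft (f i))).comp
    ((AddMonoidAlgebra.coeffAddEquiv : LaurentRing n ≃+ ((Fin n →₀ ℤ) →₀ ℤ)) :
      LaurentRing n →+ ((Fin n →₀ ℤ) →₀ ℤ))

lemma derivHom_single (n : ℕ) (i : Fin n) (f : Fin n →₀ ℤ) (c : ℤ) :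
    derivHom n i (AddMonoidAlgebra.single f c) = f i * c := by
  rw [derivHom]
  exact Finsupp.liftAddHom_apply_single (fun f : Fin n →₀ ℤ => AddMonoidHom.mulLeft (f i)) f c

lemma derivHom_mul_eq (n : ℕ) (i : Fin n) (x y : LaurentRing n) :
    derivHom n i (x * y) = derivHom n i x * epsHom n y + epsHom n x * derivHom n i y := by
  have hof : ∀ a : Fin n →₀ ℤ,
      (AddMonoidAlgebra.of ℤ (Fin n →₀ ℤ) (Multiplicative.ofAdd a) : LaurentRing n)
        = AddMonoidAlgebra.single a 1 := fun a => AddMonoidAlgebra.of_apply _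
  induction x using AddMonoidAlgebra.induction_on with
  | of a =>
    induction y using AddMonoidAlgebra.induction_on with
    | of b =>
      rw [hof, hof, AddMonoidAlgebra.single_mul_single, derivHom_single, derivHom_single,
        derivHom_single, epsHom_single, epsHom_single, Finsupp.add_apply]
      ring
    | add u v hu hv =>
      rw [mul_add, map_add, hu, hv, map_add (derivHom n i), map_add (epsHom n)]
      ring
    | smul r u hu =>
      rw [mul_smul_comm, map_zsmul, map_zsmul, map_zsmul, hu, smul_eq_mul, smul_eq_mul,
        smul_eq_mul]
      ring
  | add u v hu hv =>
    rw [add_mul, map_add, hu, hv, map_add (derivHom n i), map_add (epsHom n)]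
    ring
  | smul r u hu =>
    rw [smul_mul_assoc, map_zsmul, map_zsmul, map_zsmul, hu, smul_eq_mul, smul_eq_mul,
      smul_eq_mul]
    ring

lemma epsHom_one_sub_sVar (n : ℕ) (p : Fin n) : epsHom n (1 - sVar n p) = 0 := by
  rw [map_sub, map_one, sVar, epsHom_single, sub_self]

lemma deriv_sq_mul (n : ℕ) (i p : Fin n) (A : LaurentRing n) :
    derivHom n i ((1 - sVar n p) ^ 2 * A) = 0 := by
  have he := epsHom_one_sub_sVar n p
  rw [sq, mul_assoc, derivHom_mul_eq, derivHom_mul_eq, he, map_mul, he]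
  ring

/-- If `S` is a Laurent monomial and `1 - S = (1 - sₙ)² A` in the Laurent polynomial
ring, then `S = 1` and `A = 0`. -/
theorem monomial_eq_one_of_eq_sq_mul (n : ℕ) (hn : 1 ≤ n) (j : Fin n →₀ ℤ)
    (A : LaurentRing n)
    (h : 1 - sMonomial n j = (1 - sVar n ⟨n - 1, by omega⟩) ^ 2 * A) :
    sMonomial n j = 1 ∧ A = 0 := by
  set p : Fin n := ⟨n - 1, by omega⟩
  have hj : j = 0 := by
    ext i
    have hd := congrArg (derivHom n i) h
    rw [deriv_sq_mul, map_sub, sMonomial, derivHom_single,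
      show (1 : LaurentRing n) = AddMonoidAlgebra.single 0 1 from AddMonoidAlgebra.one_def,
      derivHom_single] at hd
    simpa using hd
  have hS : sMonomial n j = 1 := by
    rw [hj, sMonomial, AddMonoidAlgebra.one_def]
  refine ⟨hS, ?_⟩
  have hz : (1 - sVar n p) ^ 2 * A = 0 := by
    rw [← h, hS, sub_self]
  have hne : (1 - sVar n p) ≠ 0 := by
    intro h0
    have h1 : sVar n p = 1 := by
      have := sub_eq_zero.mp h0
      exact this.symm
    rw [sVar, AddMonoidAlgebra.one_def] at h1
    rcases AddMonoidAlgebra.single_inj.mp h1 with ⟨he, -⟩ | ⟨hc, -⟩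
    · have := congrArg (fun g : Fin n →₀ ℤ => g p) he
      simp at this
    · exact one_ne_zero hc
  have : (1 - sVar n p) ^ 2 ≠ 0 := pow_ne_zero 2 hne
  exact (mul_eq_zero.mp hz).resolve_left this
end
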